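/- Let R be a nontrivial commutative ring, and consider the full subcategory C of the category of R[X]-modules consisting of those modules on which multiplication by X acts injectively. The polynomial ring R[X] itself is an object of C, and the R[X]-linear endomorphism of R[X] given by multiplication by X is an epimorphism in C but not an isomorphism. -/

import Mathlib

open CategoryTheory

/-- The property of an `R[X]`-module that multiplication by `X` acts injectively on it. -/
def XRegularAction (R : Type*) [CommRing R] : ModuleCat (Polynomial R) → Prop :=
  fun M => Function.Injective fun x : M => (Polynomial.X : Polynomial R) • x

/-- For a nontrivial commutative ring `R`, in the full subcategory of `R[X]`-modules on which `X`
acts injectively, `R[X]` itself is an object, and multiplication by `X` on `R[X]` is an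
epimorphism in this category which is not an isomorphism. -/
theorem stmt_13 (R : Type*) [CommRing R] [Nontrivial R] :
    ∃ h : XRegularAction R (ModuleCat.of (Polynomial R) (Polynomial R)),
      Epi (show (⟨_, h⟩ : ObjectProperty.FullSubcategory (XRegularAction R)) ⟶ ⟨_, h⟩ from
          ObjectProperty.homMk (ModuleCat.ofHom
            (LinearMap.lsmul (Polynomial R) (Polynomial R) Polynomial.X))) ∧
        ¬ IsIso (show (⟨_, h⟩ : ObjectProperty.FullSubcategory (XRegularAction R)) ⟶ ⟨_, h⟩ from
          ObjectProperty.homMk (ModuleCat.ofHom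
            (LinearMap.lsmul (Polynomial R) (Polynomial R) Polynomial.X))) := by
  have h : XRegularAction R (ModuleCat.of (Polynomial R) (Polynomial R)) := by
    show Function.Injective fun x : Polynomial R => (Polynomial.X : Polynomial R) • x
    intro a b hab
    exact Polynomial.isRegular_X.left (by simpa [smul_eq_mul] using hab)
  refine ⟨h, ⟨fun {M} g₁ g₂ hg => ?_⟩, fun hiso => ?_⟩
  · apply ObjectProperty.hom_ext
    apply ModuleCat.hom_ext
    apply LinearMap.ext
    intro p
    apply M.2
    show (Polynomial.X : Polynomial R) •
        g₁.hom.hom p = Polynomial.X •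
        g₂.hom.hom p
    rw [← map_smul, ← map_smul]
    exact congrArg (fun f => f.hom.hom p) hg
  · obtain ⟨inv, _, hinv⟩ := hiso
    have h2 : (Polynomial.X : Polynomial R) *
        (inv.hom.hom (1 : Polynomial R)) = 1 :=
      congrArg (fun f => f.hom.hom (1 : Polynomial R)) hinv
    exact Polynomial.not_isUnit_X (IsUnit.of_mul_eq_one _ h2)
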